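/- arXiv:2301.06147 — 2 statements merged into one kernel-verified Lean document; each statement's English description precedes it below -/
import Mathlib

section
/- Repeated modal STP along the same mode satisfies: (𝒜 ⋉ₜ V) ⋉ₜ W = 𝒜 ⋉ₜ (W ⋉ V), where W ⋉ V is the matrix STP of W and V, whenever the dimensions are compatible. -/
open Matrix Kronecker

/-- `U ⊗ I_s`, with the product index types flattened to `Fin`s. -/
noncomputable def kronI {m n : ℕ} (s : ℕ) (U : Matrix (Fin m) (Fin n) ℝ) :
    Matrix (Fin (m * s)) (Fin (n * s)) ℝ :=
  Matrix.reindex finProdFinEquiv finProdFinEquiv (U ⊗ₖ (1 : Matrix (Fin s) (Fin s) ℝ))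

/-- Reinterpret a tensor along a pointwise equality of dimension vectors. -/
def castTensor {d : ℕ} {n n' : Fin d → ℕ} (h : ∀ i, n i = n' i)
    (A : ((i : Fin d) → Fin (n i)) → ℝ) : ((i : Fin d) → Fin (n' i)) → ℝ :=
  fun idx => A fun i => Fin.cast (h i).symm (idx i)

/-- The conventional tensor mode-`k` product `𝒜 ×ₖ U` of a tensor
`𝒜 ∈ ℝ^{n₁×⋯×n_d}` with a matrix `U ∈ ℝ^{m×n_k}`. -/
noncomputable def modeMul {d : ℕ} {n : Fin d → ℕ} {m : ℕ} (k : Fin d)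
    (A : ((i : Fin d) → Fin (n i)) → ℝ) (U : Matrix (Fin m) (Fin (n k)) ℝ) :
    ((i : Fin d) → Fin (Function.update n k m i)) → ℝ :=
  fun idx => ∑ j : Fin (n k),
    U (Fin.cast (by simp) (idx k)) j *
      A (fun i =>
        if h : i = k then Fin.cast (congrArg n h).symm j
        else Fin.cast (by rw [Function.update_of_ne h]) (idx i))

/-- The mode-`k` semi-tensor product `𝒜 ⋉ₖ U := 𝒜 ×ₖ (U ⊗ I_s)` of a tensor
`𝒜 ∈ ℝ^{n₁×⋯×n_d}` with `U ∈ ℝ^{m×(n_k/s)}`, where `s` is a factor of `n_k`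
(recorded by the hypothesis `c * s = n k`, `c = n_k/s`). -/
noncomputable def modeSTP {d : ℕ} {n : Fin d → ℕ} {m c s : ℕ} (k : Fin d)
    (h : c * s = n k) (A : ((i : Fin d) → Fin (n i)) → ℝ)
    (U : Matrix (Fin m) (Fin c) ℝ) :
    ((i : Fin d) → Fin (Function.update n k (m * s) i)) → ℝ :=
  modeMul k A (Matrix.reindex (Equiv.refl _) (finCongr h) (kronI s U))

/-- The matrix left semi-tensor product `W ⋉ V = (W ⊗ I_{n'}) V` in the case where the
row number `m` of `V` divides the column number of `W` via `m = c' · n'`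
(recorded as `c' * n' = m`). -/
noncomputable def stpL {a c' m q : ℕ} (n' : ℕ) (h : c' * n' = m)
    (W : Matrix (Fin a) (Fin c') ℝ) (V : Matrix (Fin m) (Fin q) ℝ) :
    Matrix (Fin (a * n')) (Fin q) ℝ :=
  Matrix.reindex (Equiv.refl _) (finCongr h) (kronI n' W) * V

lemma kronI_apply {m n : ℕ} (s : ℕ) (U : Matrix (Fin m) (Fin n) ℝ)
    (i : Fin (m * s)) (j : Fin (n * s)) :
    kronI s U i j = U i.divNat j.divNat * (if i.modNat.val = j.modNat.val then 1 else 0) := by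
  simp [kronI, Matrix.one_apply, Fin.ext_iff]
  by_cases hc : (i : ℕ) % s = j % s <;> simp only [hc, if_true, if_false, mul_one, mul_zero]

lemma fpfe_divNat {m n : ℕ} (x : Fin m) (y : Fin n) : (finProdFinEquiv (x, y)).divNat = x := by
  apply Fin.ext
  show ((y : ℕ) + n * x) / n = x
  rw [Nat.add_mul_div_left _ _ y.pos, Nat.div_eq_of_lt y.2, Nat.zero_add]

lemma fpfe_modNat {m n : ℕ} (x : Fin m) (y : Fin n) : (finProdFinEquiv (x, y)).modNat = y := by
  apply Fin.ext
  show ((y : ℕ) + n * x) % n = y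
  rw [Nat.add_mul_mod_self_left, Nat.mod_eq_of_lt y.2]

lemma fpfe_assoc {a b c : ℕ} (x : Fin a) (y : Fin b) (z : Fin c) :
    Fin.cast (mul_assoc a b c) (finProdFinEquiv (finProdFinEquiv (x, y), z)) =
      finProdFinEquiv (x, finProdFinEquiv (y, z)) := by
  apply Fin.ext
  simp [finProdFinEquiv, mul_add]
  ring

lemma fpfe_assoc' {a b c : ℕ} (x : Fin a) (y : Fin b) (z : Fin c) :
    Fin.cast (mul_assoc a b c).symm (finProdFinEquiv (x, finProdFinEquiv (y, z))) =
      finProdFinEquiv (finProdFinEquiv (x, y), z) := by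
  rw [← fpfe_assoc]; rfl

lemma fpfe_cast_left {m m' n : ℕ} (h : m = m') (y : Fin m) (r : Fin n) :
    finProdFinEquiv ((Fin.cast h y : Fin m'), r) =
      Fin.cast (by rw [h]) (finProdFinEquiv (y, r)) := by
  apply Fin.ext; simp [finProdFinEquiv]

lemma addmul_inj {s x y u v : ℕ} (hx : x < s) (hy : y < s) :
    x + s * u = y + s * v ↔ x = y ∧ u = v := by
  constructor
  · intro h
    have h1 : x = y := by
      have := congrArg (· % s) h
      simpa [Nat.add_mul_mod_self_left, Nat.mod_eq_of_lt hx, Nat.mod_eq_of_lt hy] using this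
    refine ⟨h1, ?_⟩
    subst h1
    have : s * u = s * v := by omega
    exact Nat.eq_of_mul_eq_mul_left (by omega) this
  · rintro ⟨rfl, rfl⟩; rfl

lemma divNat_cast {m m' s : ℕ} (h : m = m') (p : Fin (m * s)) :
    (Fin.cast (by rw [h]) p : Fin (m' * s)).divNat = Fin.cast h p.divNat := by
  subst h; rfl

lemma modNat_cast {m m' s : ℕ} (h : m = m') (p : Fin (m * s)) :
    (Fin.cast (by rw [h]) p : Fin (m' * s)).modNat = p.modNat := by
  subst h; rfl

lemma key {a c c' m s s'' : ℕ} (hm : c' * s'' = m)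
    (W : Matrix (Fin a) (Fin c') ℝ) (V : Matrix (Fin m) (Fin c) ℝ)
    (i : Fin (a * (s'' * s))) (j : Fin (c * s)) :
    ∑ p : Fin (m * s),
        kronI (s'' * s) W i (Fin.cast (by rw [← hm, mul_assoc]) p) * kronI s V p j
      = kronI s (stpL s'' hm W V) (Fin.cast (mul_assoc a s'' s).symm i) j := by
  have hs : 0 < s := by
    rcases Nat.eq_zero_or_pos s with h0 | h0
    · subst h0; exact absurd j.2 (by simp)
    · exact h0
  obtain ⟨⟨i1, i23⟩, rfl⟩ := finProdFinEquiv.surjective i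
  obtain ⟨⟨i2, i3⟩, rfl⟩ := finProdFinEquiv.surjective i23
  obtain ⟨⟨j1, j3⟩, rfl⟩ := finProdFinEquiv.surjective j
  rw [← Equiv.sum_comp (finProdFinEquiv (m := m) (n := s)), Fintype.sum_prod_type]
  simp only [kronI_apply, stpL, Matrix.mul_apply, Matrix.reindex_apply, Matrix.submatrix_apply,
    Equiv.refl_symm, Equiv.refl_apply, finCongr_symm, finCongr_apply, Finset.sum_mul]
  rw [← Equiv.sum_comp ((finProdFinEquiv (m := c') (n := s'')).trans (finCongr hm))]
  rw [← Equiv.sum_comp ((finProdFinEquiv (m := c') (n := s'')).trans (finCongr hm))]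
  simp only [Equiv.trans_apply, finCongr_apply, Fintype.sum_prod_type]
  simp only [fpfe_assoc', fpfe_cast_left, Fin.cast_cast,
    fpfe_assoc, fpfe_divNat, fpfe_modNat, Fin.cast_eq_self,
    divNat_cast (s := s) hm, modNat_cast (s := s) hm]
  simp only [finProdFinEquiv_apply_val]
  refine Finset.sum_congr rfl fun x _ => Finset.sum_congr rfl fun y _ => ?_
  rw [Finset.sum_eq_single i3]
  · simp only [addmul_inj i3.2 i3.2, Fin.val_eq_val, true_and, eq_self_iff_true]
    split_ifs <;> simp_all
  · intro b _ hb
    simp only [addmul_inj i3.2 b.2, Fin.val_eq_val]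
    simp [Ne.symm hb]
  · simp

lemma dite_nest {d : ℕ} {n : Fin d → ℕ} {p q : ℕ} (t i : Fin d)
    (w : ∀ _ : i = t, Fin (n i))
    (v : ∀ _ : i = t, Fin (Function.update n t p i))
    (z : Fin (Function.update (Function.update n t p) t q i)) :
    (if h : i = t then w h
     else Fin.cast (by rw [Function.update_of_ne h])
       (if h' : i = t then v h'
        else Fin.cast (by rw [Function.update_of_ne h']) z))
    = (if h : i = t then w h
       else Fin.cast (by rw [Function.update_of_ne h, Function.update_of_ne h]) z) := by
  by_cases hi : i = t
  · simp [hi]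
  · simp only [dif_neg hi, Fin.cast_cast]


/-- repeated modal STP along the same mode satisfies
`(𝒜 ⋉ₜ V) ⋉ₜ W = 𝒜 ⋉ₜ (W ⋉ V)` whenever the dimensions are compatible; the
compatibility condition is `I₃ = I₃′ ⊗ I₂`, i.e. `s' = s'' * s` below. -/
theorem modeSTP_modeSTP {d : ℕ} {n : Fin d → ℕ} {m c s a c' s' s'' : ℕ}
    (t : Fin d) (h : c * s = n t) (hm : c' * s'' = m) (hs : s' = s'' * s)
    (A : ((i : Fin d) → Fin (n i)) → ℝ)
    (V : Matrix (Fin m) (Fin c) ℝ) (W : Matrix (Fin a) (Fin c') ℝ) :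
    modeSTP t
        (show c' * s' = Function.update n t (m * s) t by
          rw [Function.update_self, hs, ← hm, mul_assoc])
        (modeSTP t h A V) W =
      castTensor
        (fun i => by rw [Function.update_idem, hs, mul_assoc])
        (modeSTP t h A (stpL s'' hm W V)) := by
  subst hs
  funext idx
  have ht : Function.update n t (m * s) t = m * s := Function.update_self t (m * s) n
  simp only [modeSTP, modeMul, castTensor, Matrix.reindex_apply, Matrix.submatrix_apply,
    Equiv.refl_symm, Equiv.refl_apply, finCongr_symm, finCongr_apply,
    Finset.mul_sum, dite_eq_ite, dif_pos, Fin.cast_cast]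
  rw [← Equiv.sum_comp (finCongr ht.symm)]
  simp only [finCongr_apply, Fin.cast_cast, Fin.cast_eq_self]
  rw [Finset.sum_comm]
  simp only [dite_nest, Fin.cast_cast]
  refine Finset.sum_congr rfl fun y _ => ?_
  simp only [← mul_assoc]
  rw [← Finset.sum_mul, key hm W V]
  rfl
end

section
/- Truncated SVD-STP error bound: let A ∈ ℝ^{n₁×n₂} with s₁|n₁, s₂|n₂, and let A = U_r⋉Σ_r⋉V_rᵀ + E₂ be the truncated SVD-STP of A with truncation rank r ≤ p = min{n₁/s₁, n₂/s₂}. Then ‖E₂‖_F ≤ √(Σ_{i=2}^q σ̃ᵢ²) + √(Σ_{i=r+1}^p ‖Sᵢ‖_F²), where σ̃₂ ≥ ⋯ ≥ σ̃_q are the singular values of the rearrangement Ã of A except the largest, q = min{s₁s₂, n₁n₂/(s₁s₂)}, and S₁,…,S_p are the diagonal blocks of the full SVD-STP's Σ. -/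
open Matrix Kronecker

/-- The Frobenius norm of a real matrix. -/
noncomputable def frob {α β : Type*} [Fintype α] [Fintype β] (M : Matrix α β ℝ) : ℝ :=
  Real.sqrt (∑ i, ∑ j, (M i j) ^ 2)

/-- The Van Loan–Pitsianis rearrangement `Ã` of a matrix `A ∈ ℝ^{m₁m₂×n₁n₂}` (rows
indexed by `(i,a) : Fin m₁ × Fin m₂`, columns by `(j,b) : Fin n₁ × Fin n₂`, so the
`(i,j)` block of size `m₂×n₂` is `A_{i,j}(a,b) = A (i,a) (j,b)`): the `((j-1)m₁+i)`-th
row of `Ã` is `vec(A_{i,j})ᵀ`, where `vec` is column-major. -/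
def rearrange {m₁ m₂ n₁ n₂ : ℕ} (A : Matrix (Fin m₁ × Fin m₂) (Fin n₁ × Fin n₂) ℝ) :
    Matrix (Fin n₁ × Fin m₁) (Fin n₂ × Fin m₂) ℝ :=
  Matrix.of fun x y => A (x.2, y.2) (x.1, y.1)

/-- The rectangular block-diagonal matrix `blkdiag(S₁,…,S_p) ∈ ℝ^{p₁s₁×p₂s₂}` obtained by
aligning the `s₁×s₂` blocks `S₁,…,S_p` along the diagonal (all other blocks zero). -/
noncomputable def blkdiag {s₁ s₂ : ℕ} (p₁ p₂ p : ℕ)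
    (S : Fin p → Matrix (Fin s₁) (Fin s₂) ℝ) :
    Matrix (Fin p₁ × Fin s₁) (Fin p₂ × Fin s₂) ℝ :=
  Matrix.of fun x y =>
    if h : (x.1 : ℕ) = (y.1 : ℕ) ∧ (x.1 : ℕ) < p then S ⟨x.1, h.2⟩ x.2 y.2 else 0

section Helpers

attribute [local instance] Matrix.frobeniusNormedAddCommGroup

lemma frob_eq_norm {α β : Type*} [Fintype α] [Fintype β] (M : Matrix α β ℝ) :
    frob M = ‖M‖ := by
  rw [Matrix.frobenius_norm_def, frob, Real.sqrt_eq_rpow]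
  congr 1
  have h : ∀ x : ℝ, ‖x‖ ^ (2:ℝ) = x ^ 2 := by
    intro x
    rw [Real.norm_eq_abs, show (2:ℝ) = ((2:ℕ):ℝ) by norm_num, Real.rpow_natCast, sq_abs]
  simp [h]

lemma frob_add_le {α β : Type*} [Fintype α] [Fintype β] (M N : Matrix α β ℝ) :
    frob (M + N) ≤ frob M + frob N := by
  simp only [frob_eq_norm]; exact norm_add_le _ _

end Helpers

lemma frobSq_eq_trace {α β : Type*} [Fintype α] [Fintype β] (M : Matrix α β ℝ) :
    (∑ i, ∑ j, (M i j) ^ 2) = (Mᵀ * M).trace := by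
  rw [Matrix.trace, Finset.sum_comm]
  simp [Matrix.mul_apply, Matrix.diag, sq]

lemma frob_conj {α β γ δ : Type*} [Fintype α] [Fintype β] [Fintype γ] [Fintype δ]
    [DecidableEq β] [DecidableEq δ]
    (O₁ : Matrix α β ℝ) (O₂ : Matrix γ δ ℝ) (h₁ : O₁ᵀ * O₁ = 1) (h₂ : O₂ᵀ * O₂ = 1)
    (T : Matrix β δ ℝ) : frob (O₁ * T * O₂ᵀ) = frob T := by
  unfold frob
  congr 1
  rw [frobSq_eq_trace, frobSq_eq_trace]
  rw [Matrix.transpose_mul, Matrix.transpose_mul, Matrix.transpose_transpose]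
  have e : O₂ * (Tᵀ * O₁ᵀ) * (O₁ * T * O₂ᵀ) = O₂ * (Tᵀ * T) * O₂ᵀ := by
    simp only [← Matrix.mul_assoc]
    rw [Matrix.mul_assoc (O₂ * Tᵀ) O₁ᵀ O₁, h₁, Matrix.mul_one]
  rw [e, Matrix.trace_mul_comm, ← Matrix.mul_assoc, ← Matrix.mul_assoc, h₂,
    Matrix.one_mul]

lemma kron_orth {m s : ℕ} (O : Matrix (Fin m) (Fin m) ℝ) (hO : Oᵀ * O = 1) :
    (O ⊗ₖ (1 : Matrix (Fin s) (Fin s) ℝ))ᵀ * (O ⊗ₖ (1 : Matrix (Fin s) (Fin s) ℝ)) = 1 := by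
  rw [← Matrix.kroneckerMap_transpose, Matrix.transpose_one, ← Matrix.mul_kronecker_mul,
    hO, Matrix.one_mul, Matrix.one_kronecker_one]

lemma sum_fin_dite {ρ₁ ρ : ℕ} (h : ρ ≤ ρ₁) (f : ∀ n, n < ρ → ℝ) :
    ∑ k : Fin ρ₁, (if hk : (k : ℕ) < ρ then f k hk else 0) = ∑ k : Fin ρ, f k k.2 := by
  set F : ℕ → ℝ := fun n => if hn : n < ρ then f n hn else 0 with hF
  have l1 : ∑ k : Fin ρ₁, (if hk : (k : ℕ) < ρ then f k hk else 0) = ∑ n ∈ Finset.range ρ₁, F n :=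
    Fin.sum_univ_eq_sum_range F ρ₁
  have l2 : ∑ k : Fin ρ, f k k.2 = ∑ n ∈ Finset.range ρ, F n := by
    rw [← Fin.sum_univ_eq_sum_range F ρ]
    refine Finset.sum_congr rfl fun k _ => ?_
    simp [hF, k.2]
  rw [l1, l2]
  refine (Finset.sum_subset (Finset.range_subset_range.2 h) fun n _ hn => ?_).symm
  simp only [Finset.mem_range, not_lt] at hn
  simp [hF, Nat.not_lt.2 hn]

lemma sum_fin_lt {ρ r : ℕ} (hr : r ≤ ρ) (f : Fin ρ → ℝ) :
    ∑ k : Fin ρ, (if (k : ℕ) < r then f k else 0) = ∑ k : Fin r, f (Fin.castLE hr k) := by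
  have := sum_fin_dite hr (fun n hn => f (Fin.castLE hr ⟨n, hn⟩))
  rw [← this]
  refine Finset.sum_congr rfl fun k _ => ?_
  by_cases h : (k : ℕ) < r
  · rw [if_pos h, dif_pos h]; congr 1
  · rw [if_neg h, dif_neg h]

lemma sum_pair {ρ₁ ρ₂ ρ : ℕ} (h1 : ρ ≤ ρ₁) (h2 : ρ ≤ ρ₂)
    (g : ∀ (k : Fin ρ₁) (k' : Fin ρ₂), (k : ℕ) < ρ → ℝ) :
    ∑ k : Fin ρ₁, ∑ k' : Fin ρ₂,
      (if h : (k : ℕ) = (k' : ℕ) ∧ (k : ℕ) < ρ then g k k' h.2 else 0) =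
    ∑ k : Fin ρ, g (Fin.castLE h1 k) (Fin.castLE h2 k) k.2 := by
  have step : ∀ k : Fin ρ₁,
      (∑ k' : Fin ρ₂, if h : (k : ℕ) = (k' : ℕ) ∧ (k : ℕ) < ρ then g k k' h.2 else 0) =
      if hk : (k : ℕ) < ρ then g k ⟨(k : ℕ), hk.trans_le h2⟩ hk else 0 := by
    intro k
    by_cases hk : (k : ℕ) < ρ
    · rw [dif_pos hk, Finset.sum_eq_single (⟨(k : ℕ), hk.trans_le h2⟩ : Fin ρ₂)]
      · rw [dif_pos ⟨rfl, hk⟩]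
      · intro b _ hb
        rw [dif_neg]
        rintro ⟨hbe, -⟩
        exact hb (by ext; exact hbe.symm)
      · intro h; exact absurd (Finset.mem_univ _) h
    · rw [dif_neg hk]
      refine Finset.sum_eq_zero fun b _ => ?_
      rw [dif_neg]; rintro ⟨-, hlt⟩; exact hk hlt
  rw [Finset.sum_congr rfl fun k _ => step k,
    sum_fin_dite h1 (fun n hn => g ⟨n, hn.trans_le h1⟩ ⟨n, hn.trans_le h2⟩ hn)]
  rfl

lemma triple_apply {p₁ s₁ p₂ s₂ ρ₁ ρ₂ ρ : ℕ} (h1 : ρ ≤ ρ₁) (h2 : ρ ≤ ρ₂)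
    (M : Matrix (Fin p₁) (Fin ρ₁) ℝ) (N : Matrix (Fin p₂) (Fin ρ₂) ℝ)
    (T : Fin ρ → Matrix (Fin s₁) (Fin s₂) ℝ) (i : Fin p₁) (a : Fin s₁)
    (j : Fin p₂) (c : Fin s₂) :
    ((M ⊗ₖ (1 : Matrix (Fin s₁) (Fin s₁) ℝ)) * blkdiag ρ₁ ρ₂ ρ T *
      ((N ⊗ₖ (1 : Matrix (Fin s₂) (Fin s₂) ℝ)))ᵀ) (i, a) (j, c) =
    ∑ k : Fin ρ, M i (Fin.castLE h1 k) * T k a c * N j (Fin.castLE h2 k) := by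
  simp only [Matrix.mul_apply, Fintype.sum_prod_type, Matrix.transpose_apply,
    Matrix.kroneckerMap_apply, Matrix.one_apply, blkdiag, Matrix.of_apply,
    mul_ite, ite_mul, mul_one, mul_zero, one_mul, zero_mul, Finset.sum_ite_eq,
    Finset.sum_ite_eq', Finset.mem_univ, if_true]
  simp only [Finset.sum_mul, mul_dite, dite_mul, mul_zero, zero_mul]
  rw [Finset.sum_comm]
  exact sum_pair h1 h2 (fun k k' hk => M i k * T ⟨(k : ℕ), hk⟩ a c * N j k')

lemma frobSq_blkdiag {s₁ s₂ p₁ p₂ p : ℕ} (h1 : p ≤ p₁) (h2 : p ≤ p₂)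
    (S : Fin p → Matrix (Fin s₁) (Fin s₂) ℝ) :
    (∑ x, ∑ y, (blkdiag p₁ p₂ p S x y) ^ 2) =
    ∑ i : Fin p, ∑ a, ∑ c, S i a c ^ 2 := by
  simp only [Fintype.sum_prod_type]
  rw [show (∑ k : Fin p₁, ∑ a : Fin s₁, ∑ k' : Fin p₂, ∑ c : Fin s₂,
      (blkdiag p₁ p₂ p S (k, a) (k', c)) ^ 2) =
      ∑ k : Fin p₁, ∑ k' : Fin p₂, ∑ a : Fin s₁, ∑ c : Fin s₂,
      (blkdiag p₁ p₂ p S (k, a) (k', c)) ^ 2 from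
    Finset.sum_congr rfl fun k _ => Finset.sum_comm]
  rw [show (∑ k : Fin p₁, ∑ k' : Fin p₂, ∑ a : Fin s₁, ∑ c : Fin s₂,
      (blkdiag p₁ p₂ p S (k, a) (k', c)) ^ 2) =
      ∑ k : Fin p₁, ∑ k' : Fin p₂,
        (if h : (k : ℕ) = (k' : ℕ) ∧ (k : ℕ) < p then
          (∑ a : Fin s₁, ∑ c : Fin s₂, S ⟨(k : ℕ), h.2⟩ a c ^ 2) else 0) from
    Finset.sum_congr rfl fun k _ => Finset.sum_congr rfl fun k' _ => by
      by_cases h : (k : ℕ) = (k' : ℕ) ∧ (k : ℕ) < p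
      · rw [dif_pos h]
        exact Finset.sum_congr rfl fun a _ => Finset.sum_congr rfl fun c _ => by
          have hk' : (k' : ℕ) < p := h.1 ▸ h.2
          simp [blkdiag, h, hk']
      · rw [dif_neg h]
        refine Finset.sum_eq_zero fun a _ => Finset.sum_eq_zero fun c _ => ?_
        simp [blkdiag, h]]
  rw [sum_pair h1 h2 (fun k k' hk => ∑ a : Fin s₁, ∑ c : Fin s₂, S ⟨(k : ℕ), hk⟩ a c ^ 2)]
  exact Finset.sum_congr rfl fun i _ => by congr 1

/-- truncated SVD-STP error bound: let `A ∈ ℝ^{n₁×n₂}` with `s₁ ∣ n₁`,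
`s₂ ∣ n₂` (`p₁ = n₁/s₁`, `p₂ = n₂/s₂`), let `σ̃₁ ≥ ⋯ ≥ σ̃_q ≥ 0` be the singular values
of the rearrangement `Ã` (given by a thin SVD, `q = min{s₁s₂, n₁n₂/(s₁s₂)}`), let
`A = U ⋉ Σ ⋉ Vᵀ + E₁` be the full SVD-STP of `A` (with `Σ = blkdiag(S₁,…,S_p)`,
`p = min{p₁,p₂}` and `‖E₁‖_F = √(∑_{i=2}^q σ̃ᵢ²)`), and for `r ≤ p` let
`A = U_r ⋉ Σ_r ⋉ V_rᵀ + E₂` be the truncated SVD-STP.  Then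
`‖E₂‖_F ≤ √(∑_{i=2}^q σ̃ᵢ²) + √(∑_{i=r+1}^p ‖Sᵢ‖_F²)`. -/
theorem truncated_svd_stp_error_bound {p₁ s₁ p₂ s₂ r : ℕ}
    (hr : r ≤ min p₁ p₂)
    (A : Matrix (Fin p₁ × Fin s₁) (Fin p₂ × Fin s₂) ℝ)
    -- the singular values of the rearrangement Ã, via a thin SVD
    (σ : Fin (min (s₁ * s₂) (p₁ * p₂)) → ℝ)
    (P : Matrix (Fin p₂ × Fin p₁) (Fin (min (s₁ * s₂) (p₁ * p₂))) ℝ)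
    (Q : Matrix (Fin s₂ × Fin s₁) (Fin (min (s₁ * s₂) (p₁ * p₂))) ℝ)
    (hP : Pᵀ * P = 1) (hQ : Qᵀ * Q = 1)
    (hσ : Antitone σ) (hσ0 : ∀ i, 0 ≤ σ i)
    (hAre : rearrange A = P * Matrix.diagonal σ * Qᵀ)
    -- the full SVD-STP of A
    (U : Matrix (Fin p₁) (Fin p₁) ℝ) (V : Matrix (Fin p₂) (Fin p₂) ℝ)
    (hU : Uᵀ * U = 1) (hU' : U * Uᵀ = 1) (hV : Vᵀ * V = 1) (hV' : V * Vᵀ = 1)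
    (S : Fin (min p₁ p₂) → Matrix (Fin s₁) (Fin s₂) ℝ)
    (hS : Antitone (fun i => frob (S i)))
    (E₁ : Matrix (Fin p₁ × Fin s₁) (Fin p₂ × Fin s₂) ℝ)
    (hfull : A = (U ⊗ₖ (1 : Matrix (Fin s₁) (Fin s₁) ℝ)) * blkdiag p₁ p₂ (min p₁ p₂) S *
        ((V ⊗ₖ (1 : Matrix (Fin s₂) (Fin s₂) ℝ)))ᵀ + E₁)
    (hE₁ : frob E₁ = Real.sqrt (∑ i ∈ Finset.univ.filter
        (fun i : Fin (min (s₁ * s₂) (p₁ * p₂)) => (i : ℕ) ≠ 0), σ i ^ 2))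
    -- the truncated SVD-STP of A
    (Ur : Matrix (Fin p₁) (Fin r) ℝ) (Vr : Matrix (Fin p₂) (Fin r) ℝ)
    (hUr : ∀ i j, Ur i j = U i (Fin.castLE (hr.trans (min_le_left _ _)) j))
    (hVr : ∀ i j, Vr i j = V i (Fin.castLE (hr.trans (min_le_right _ _)) j))
    (E₂ : Matrix (Fin p₁ × Fin s₁) (Fin p₂ × Fin s₂) ℝ)
    (htrunc : A = (Ur ⊗ₖ (1 : Matrix (Fin s₁) (Fin s₁) ℝ)) *
        blkdiag r r r (fun i => S (Fin.castLE hr i)) *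
        ((Vr ⊗ₖ (1 : Matrix (Fin s₂) (Fin s₂) ℝ)))ᵀ + E₂) :
    frob E₂ ≤
      Real.sqrt (∑ i ∈ Finset.univ.filter
        (fun i : Fin (min (s₁ * s₂) (p₁ * p₂)) => (i : ℕ) ≠ 0), σ i ^ 2) +
      Real.sqrt (∑ i ∈ Finset.univ.filter
        (fun i : Fin (min p₁ p₂) => r ≤ (i : ℕ)), frob (S i) ^ 2) := by
  have hp1 : min p₁ p₂ ≤ p₁ := min_le_left _ _
  have hp2 : min p₁ p₂ ≤ p₂ := min_le_right _ _
  set S' : Fin (min p₁ p₂) → Matrix (Fin s₁) (Fin s₂) ℝ :=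
    fun i => if r ≤ (i : ℕ) then S i else 0 with hS'
  set D : Matrix (Fin p₁ × Fin s₁) (Fin p₂ × Fin s₂) ℝ :=
    (U ⊗ₖ (1 : Matrix (Fin s₁) (Fin s₁) ℝ)) * blkdiag p₁ p₂ (min p₁ p₂) S' *
      ((V ⊗ₖ (1 : Matrix (Fin s₂) (Fin s₂) ℝ)))ᵀ with hD
  -- the difference of the full and truncated products is D
  have hdiff : (U ⊗ₖ (1 : Matrix (Fin s₁) (Fin s₁) ℝ)) * blkdiag p₁ p₂ (min p₁ p₂) S *
      ((V ⊗ₖ (1 : Matrix (Fin s₂) (Fin s₂) ℝ)))ᵀ =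
      (Ur ⊗ₖ (1 : Matrix (Fin s₁) (Fin s₁) ℝ)) * blkdiag r r r (fun i => S (Fin.castLE hr i)) *
      ((Vr ⊗ₖ (1 : Matrix (Fin s₂) (Fin s₂) ℝ)))ᵀ + D := by
    ext ⟨i, a⟩ ⟨j, c⟩
    rw [Matrix.add_apply, hD, triple_apply hp1 hp2, triple_apply le_rfl le_rfl,
      triple_apply hp1 hp2]
    simp only [hUr, hVr, hS',
      apply_ite (fun (M : Matrix (Fin s₁) (Fin s₂) ℝ) => M a c), Matrix.zero_apply,
      mul_ite, ite_mul, mul_zero, zero_mul]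
    have split : ∀ k : Fin (min p₁ p₂),
        U i (Fin.castLE hp1 k) * S k a c * V j (Fin.castLE hp2 k) =
        (if (k : ℕ) < r then U i (Fin.castLE hp1 k) * S k a c * V j (Fin.castLE hp2 k) else 0)
        + (if r ≤ (k : ℕ) then U i (Fin.castLE hp1 k) * S k a c * V j (Fin.castLE hp2 k) else 0) := by
      intro k
      by_cases hk : (k : ℕ) < r
      · rw [if_pos hk, if_neg (not_le.2 hk), add_zero]
      · rw [if_neg hk, if_pos (not_lt.1 hk), zero_add]
    rw [Finset.sum_congr rfl fun k _ => split k, Finset.sum_add_distrib,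
      sum_fin_lt hr (fun k => U i (Fin.castLE hp1 k) * S k a c * V j (Fin.castLE hp2 k))]
    congr 1
  -- hence E₂ = E₁ + D
  have key : E₂ = E₁ + D := by
    have h := htrunc.symm.trans hfull
    rw [hdiff, add_assoc] at h
    exact (add_left_cancel h).trans (add_comm D E₁)
  have hfrobD : frob D = Real.sqrt (∑ i ∈ Finset.univ.filter
      (fun i : Fin (min p₁ p₂) => r ≤ (i : ℕ)), frob (S i) ^ 2) := by
    rw [hD, frob_conj _ _ (kron_orth U hU) (kron_orth V hV)]
    unfold frob
    congr 1
    rw [frobSq_blkdiag hp1 hp2, Finset.sum_filter]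
    refine Finset.sum_congr rfl fun i _ => ?_
    by_cases hi : r ≤ (i : ℕ)
    · rw [if_pos hi]
      have hnn : (0:ℝ) ≤ ∑ a, ∑ c, S i a c ^ 2 :=
        Finset.sum_nonneg fun _ _ => Finset.sum_nonneg fun _ _ => sq_nonneg _
      rw [Real.sq_sqrt hnn]
      simp [hS', hi]
    · rw [if_neg hi]
      simp [hS', hi]
  calc frob E₂ = frob (E₁ + D) := by rw [key]
    _ ≤ frob E₁ + frob D := frob_add_le _ _
    _ = _ := by rw [hE₁, hfrobD]
end
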